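/- Let k₀ ∈ Z, λ > 0, p an odd prime, δ = p−1, and let P(w) = Π_{j=0}^{λ−1}(w − w_{k₀ − jδ}) where w_k = (1+2p)^k − 1. If k ≡ k₀ mod δ and P(w_k) ≠ 0, then |v_p(P(w_k)) − pλ/(p−1)| ≤ A·(log λ + log|k−k₀| + 1) for some absolute constant A (i.e., v_p(P(w_k)) = pλ/(p−1) + O(log λ, log|k−k₀|)). -/

import Mathlib

set_option linter.unusedVariables false
set_option maxHeartbeats 1000000

section helpers
variable {p : ℕ} [hp : Fact p.Prime]


lemma myNotDvd : ¬ (p:ℤ) ∣ (1 + 2*p) := by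
  intro h
  rw [add_comm] at h
  have h1 : (p:ℤ) ∣ 1 := (Int.dvd_add_right (dvd_mul_left (p:ℤ) 2)).mp h
  have := Int.le_of_dvd one_pos h1
  have := hp.out.two_le
  omega

lemma myU_cast : ((1 + 2*(p:ℤ) : ℤ) : ℚ_[p]) = 1 + 2*(p:ℚ_[p]) := by push_cast; ring

lemma myU_ne_zero : (1 + 2*(p:ℚ_[p])) ≠ 0 := by
  rw [← myU_cast, Int.cast_ne_zero]
  have := hp.out.pos
  omega

lemma myU_norm : ‖(1 + 2*(p:ℚ_[p]))‖ = 1 := by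
  rw [← myU_cast]
  have h1 := Padic.norm_int_le_one (p := p) (1 + 2*(p:ℤ))
  rcases lt_or_eq_of_le h1 with h | h
  · exact absurd ((Padic.norm_intCast_lt_one_iff).mp h) myNotDvd
  · exact h

lemma myVal_zero_of_norm_one {x : ℚ_[p]} (hx : x ≠ 0) (h1 : ‖x‖ = 1) : x.valuation = 0 := by
  have h := Padic.norm_eq_zpow_neg_valuation hx
  rw [h1] at h
  have hp0 : (0:ℝ) < p := by exact_mod_cast hp.out.pos
  have hp1 : (p:ℝ) ≠ 1 := by exact_mod_cast hp.out.ne_one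
  have h2 : (p:ℝ) ^ (0:ℤ) = (p:ℝ) ^ (-x.valuation) := by simpa using h
  have := (zpow_right_inj₀ hp0 hp1).mp h2
  omega

lemma myU_zpow_val (z : ℤ) : ((1 + 2*(p:ℚ_[p])) ^ z).valuation = 0 := by
  apply myVal_zero_of_norm_one (zpow_ne_zero _ myU_ne_zero)
  rw [norm_zpow, myU_norm, one_zpow]

lemma myPadicValInt_eq_emultiplicity {z : ℤ} (hz : z ≠ 0) :
    (padicValInt p z : ℕ∞) = emultiplicity (p : ℤ) z := by
  rw [padicValInt, padicValNat_eq_emultiplicity (Int.natAbs_ne_zero.mpr hz),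
    Int.emultiplicity_natAbs]

lemma myLTE (hodd : Odd p) {m : ℕ} (hm : 0 < m) :
    padicValInt p ((1 + 2*(p:ℤ))^m - 1) = 1 + padicValNat p m := by
  have hplt : (1:ℤ) < 1 + 2*p := by have := hp.out.pos; omega
  have hA0 : ((1 + 2*(p:ℤ))^m - 1) ≠ 0 := by
    have := one_lt_pow₀ (n := m) hplt (by omega)
    omega
  have hxy : (p:ℤ) ∣ (1 + 2*p) - 1 := ⟨2, by ring⟩
  have key := Int.emultiplicity_pow_sub_pow hp.out hodd hxy myNotDvd m
  rw [one_pow] at key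
  have h2 : ((1:ℤ) + 2*p) - 1 = 2*p := by ring
  rw [h2] at key
  have hnd2 : ¬ p ∣ 2 := by
    intro h
    have h2 : p = 2 := (Nat.prime_dvd_prime_iff_eq hp.out Nat.prime_two).mp h
    rw [h2] at hodd
    exact (Nat.not_odd_iff_even.mpr even_two) hodd
  have h2p : emultiplicity ((p:ℕ):ℤ) ((2:ℤ)*p) = (1:ℕ∞) := by
    have : ((2*p : ℕ) : ℤ) = (2:ℤ)*p := by push_cast; ring
    rw [← this, Int.natCast_emultiplicity,
      ← padicValNat_eq_emultiplicity (by have := hp.out.pos; positivity),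
      padicValNat.mul two_ne_zero hp.out.pos.ne', padicValNat.eq_zero_of_not_dvd hnd2,
      padicValNat_self]
    simp
  rw [h2p, ← padicValNat_eq_emultiplicity hm.ne'] at key
  have := (myPadicValInt_eq_emultiplicity hA0).trans key
  exact_mod_cast this



lemma myValNeg {x : ℚ_[p]} (hx : x ≠ 0) : (-x).valuation = x.valuation := by
  have h1 : ((-1 : ℚ_[p])).valuation = 0 := by
    have : ((-1 : ℤ) : ℚ_[p]) = (-1 : ℚ_[p]) := by push_cast; ring
    rw [← this, Padic.valuation_intCast]
    simp [padicValInt]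
  rw [show (-x : ℚ_[p]) = (-1) * x by ring, Padic.valuation_mul (by norm_num) hx, h1,
    zero_add]

lemma myValNat (hodd : Odd p) {m : ℕ} (hm : 0 < m) :
    ((1 + 2*(p:ℚ_[p]))^(m:ℕ) - 1).valuation = 1 + padicValNat p m := by
  have hcast : (((1 + 2*(p:ℤ))^m - 1 : ℤ) : ℚ_[p]) = (1 + 2*(p:ℚ_[p]))^(m:ℕ) - 1 := by
    push_cast; ring
  rw [← hcast, Padic.valuation_intCast, myLTE hodd hm]
  push_cast; ring

lemma myFactorNeZero (hodd : Odd p) {m : ℕ} (hm : 0 < m) :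
    ((1 + 2*(p:ℚ_[p]))^(m:ℕ) - 1) ≠ 0 := by
  have hcast : (((1 + 2*(p:ℤ))^m - 1 : ℤ) : ℚ_[p]) = (1 + 2*(p:ℚ_[p]))^(m:ℕ) - 1 := by
    push_cast; ring
  rw [← hcast, Int.cast_ne_zero]
  have hplt : (1:ℤ) < 1 + 2*p := by have := hp.out.pos; omega
  have := one_lt_pow₀ (n := m) hplt (by omega)
  omega

lemma myValZpow (hodd : Odd p) {n : ℤ} (hn : n ≠ 0) :
    ((1 + 2*(p:ℚ_[p]))^(n:ℤ) - 1).valuation = 1 + padicValInt p n ∧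
    ((1 + 2*(p:ℚ_[p]))^(n:ℤ) - 1) ≠ 0 := by
  set u : ℚ_[p] := 1 + 2*(p:ℚ_[p]) with hu
  rcases hn.lt_or_gt with h | h
  · set m : ℕ := (-n).toNat with hm
    have hmpos : 0 < m := by omega
    have hmn : (m : ℤ) = -n := by omega
    have hfact : u^(n:ℤ) - 1 = -(u^(n:ℤ) * (u^(m:ℕ) - 1)) := by
      have : u^(n:ℤ) * (u^(m:ℕ)) = 1 := by
        rw [← zpow_natCast, ← zpow_add₀ myU_ne_zero, hmn]
        simp
      rw [mul_sub, this]; ring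
    have hne : u^(n:ℤ) * (u^(m:ℕ) - 1) ≠ 0 :=
      mul_ne_zero (zpow_ne_zero _ myU_ne_zero) (myFactorNeZero hodd hmpos)
    constructor
    · rw [hfact, myValNeg hne,
        Padic.valuation_mul (zpow_ne_zero _ myU_ne_zero) (myFactorNeZero hodd hmpos),
        myU_zpow_val n, zero_add, myValNat hodd hmpos]
      have hnab : n.natAbs = m := by omega
      simp [padicValInt, hnab]
    · rw [hfact]; exact neg_ne_zero.mpr hne
  · set m : ℕ := n.toNat with hm
    have hmpos : 0 < m := by omega
    have hmn : u ^ (n:ℤ) = u ^ (m:ℕ) := by rw [← zpow_natCast]; congr 1; omega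
    rw [hmn]
    refine ⟨?_, myFactorNeZero hodd hmpos⟩
    rw [myValNat hodd hmpos]
    have hnab : n.natAbs = m := by omega
    simp [padicValInt, hnab]


lemma myValProd {ι : Type*} {s : Finset ι} {f : ι → ℚ_[p]} (h : ∀ i ∈ s, f i ≠ 0) :
    (∏ i ∈ s, f i).valuation = ∑ i ∈ s, (f i).valuation := by
  classical
  induction s using Finset.cons_induction with
  | empty => simp [Padic.valuation_one]
  | cons a s ha ih =>
    rw [Finset.prod_cons, Finset.sum_cons,
      Padic.valuation_mul (h a (Finset.mem_cons_self a s))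
        (Finset.prod_ne_zero_iff.mpr fun i hi => h i (Finset.mem_cons_of_mem hi)),
      ih fun i hi => h i (Finset.mem_cons_of_mem hi)]

lemma mySumFact (lam m : ℕ) :
    padicValNat p (Nat.factorial (m + lam)) =
      padicValNat p (Nat.factorial m) + ∑ j ∈ Finset.range lam, padicValNat p (m + 1 + j) := by
  induction lam with
  | zero => simp
  | succ l ih =>
    rw [Finset.sum_range_succ]
    have h1 : Nat.factorial (m + (l+1)) = Nat.factorial (m+l) * (m+l+1) := by
      rw [show m+(l+1) = (m+l)+1 by ring, Nat.factorial_succ]; ring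
    rw [h1, padicValNat.mul (Nat.factorial_ne_zero _) (by omega), ih,
      show m+l+1 = m+1+l by ring, add_assoc]

lemma myDigitSum (n : ℕ) : (Nat.digits p n).sum ≤ (p-1) * (Nat.log p n + 1) := by
  rcases eq_or_ne n 0 with rfl | h
  · simp
  · have hlen : (Nat.digits p n).length = Nat.log p n + 1 := Nat.digits_len p n hp.out.one_lt h
    calc (Nat.digits p n).sum ≤ (Nat.digits p n).length • (p-1) :=
          List.sum_le_card_nsmul _ _ fun x hx => by
            have := Nat.digits_lt_base hp.out.one_lt hx; omega
      _ = (p-1) * (Nat.log p n + 1) := by rw [hlen, smul_eq_mul]; ring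

lemma myCastP : (((p-1) : ℕ) : ℤ) = (p:ℤ) - 1 := by
  have := hp.out.one_le; omega

lemma myCore (m' lam : ℕ) :
    |((p:ℤ)-1) * (∑ j ∈ Finset.range lam, (padicValNat p (m' + 1 + j) : ℤ)) - lam|
      ≤ ((p:ℤ)-1) * ((Nat.log p (m' + lam) : ℤ) + 1) := by
  have hleg : ∀ n : ℕ, ((p:ℤ)-1) * (padicValNat p (Nat.factorial n) : ℤ)
      = (n : ℤ) - ((Nat.digits p n).sum : ℤ) := by
    intro n
    calc ((p:ℤ)-1) * (padicValNat p (Nat.factorial n) : ℤ)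
        = (((p-1) * padicValNat p (Nat.factorial n) : ℕ) : ℤ) := by
          rw [Nat.cast_mul, myCastP]
      _ = ((n - (Nat.digits p n).sum : ℕ) : ℤ) := by
          rw [sub_one_mul_padicValNat_factorial]
      _ = (n : ℤ) - ((Nat.digits p n).sum : ℤ) := by
          rw [Nat.cast_sub (Nat.digit_sum_le p n)]
  have hS : ((padicValNat p (Nat.factorial (m'+lam)) : ℤ))
      = (padicValNat p (Nat.factorial m') : ℤ)
        + (∑ j ∈ Finset.range lam, (padicValNat p (m' + 1 + j) : ℤ)) := by
    have := mySumFact (p := p) lam m'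
    push_cast [this]
    ring
  set S : ℤ := ∑ j ∈ Finset.range lam, (padicValNat p (m' + 1 + j) : ℤ) with hSdef
  have key : ((p:ℤ)-1) * S = (lam : ℤ) - ((Nat.digits p (m'+lam)).sum : ℤ)
      + ((Nat.digits p m').sum : ℤ) := by
    have e1 := hleg (m' + lam)
    have e2 := hleg m'
    have h4 := congrArg (fun x : ℤ => ((p:ℤ)-1) * x) hS
    simp only [mul_add] at h4
    rw [Nat.cast_add] at e1
    linarith
  have hdb : ∀ n : ℕ, n ≤ m' + lam →
      ((Nat.digits p n).sum : ℤ) ≤ ((p:ℤ)-1) * ((Nat.log p (m'+lam) : ℤ) + 1) := by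
    intro n hn
    calc ((Nat.digits p n).sum : ℤ) ≤ (((p-1) * (Nat.log p n + 1) : ℕ) : ℤ) :=
          Nat.cast_le.mpr (myDigitSum n)
      _ ≤ (((p-1) * (Nat.log p (m'+lam) + 1) : ℕ) : ℤ) := by
          exact_mod_cast Nat.mul_le_mul_left _ (by
            have := Nat.log_mono_right (b := p) hn; omega)
      _ = ((p:ℤ)-1) * ((Nat.log p (m'+lam) : ℤ) + 1) := by
          rw [Nat.cast_mul, myCastP]; push_cast; ring
  have hb1 := hdb (m'+lam) le_rfl
  have hb2 := hdb m' (by omega)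
  have hn1 : (0:ℤ) ≤ ((Nat.digits p (m'+lam)).sum : ℤ) := Int.natCast_nonneg _
  have hn2 : (0:ℤ) ≤ ((Nat.digits p m').sum : ℤ) := Int.natCast_nonneg _
  rw [key, abs_le]
  constructor <;> linarith
end helpers

/-- Let `p` be an odd prime, `δ = p-1`, `w_m = (1+2p)^m - 1`, and
`P(w) = Π_{j=0}^{λ-1} (w - w_{k₀ - jδ})`.  If `k ≡ k₀ (mod δ)` and `P(w_k) ≠ 0`, then
`v_p(P(w_k)) = pλ/(p-1) + O(log λ, log|k - k₀|)`. -/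
theorem stmt_18 :
    ∃ A : ℝ, 0 < A ∧
      ∀ (p : ℕ) [Fact p.Prime], Odd p →
        ∀ (k₀ k : ℤ) (lam : ℕ), 0 < lam →
          ((p : ℤ) - 1) ∣ (k - k₀) →
          ∀ P : ℚ_[p],
            P = ∏ j ∈ Finset.range lam,
                  (((1 + 2 * (p : ℚ_[p])) ^ k - 1)
                    - ((1 + 2 * (p : ℚ_[p])) ^ (k₀ - (j : ℤ) * ((p : ℤ) - 1)) - 1)) →
            P ≠ 0 →
            |(P.valuation : ℝ) - (p : ℝ) * (lam : ℝ) / ((p : ℝ) - 1)|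
              ≤ A * (Real.log (lam : ℝ) + Real.log ((|k - k₀| : ℤ) : ℝ) + 1) := by
  refine ⟨2, by norm_num, ?_⟩
  intro p _inst hodd k₀ k lam hlam hdvd P hP hP0
  have hp3 : 3 ≤ p := by
    rcases hodd with ⟨r, hr⟩
    have h2 := (Fact.out : p.Prime).two_le
    omega
  obtain ⟨t, ht⟩ := hdvd
  set δ : ℤ := (p:ℤ) - 1 with hδ
  have hp3' : (3:ℤ) ≤ (p:ℤ) := by exact_mod_cast hp3
  have hδ2 : (2:ℤ) ≤ δ := by omega
  set u : ℚ_[p] := 1 + 2*(p:ℚ_[p]) with hu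
  set f : ℕ → ℚ_[p] := fun j => ((u ^ k - 1) - (u ^ (k₀ - (j:ℤ) * δ) - 1)) with hf
  -- factorization of each term
  have hfact : ∀ j : ℕ, f j = u ^ (k₀ - (j:ℤ)*δ) * (u ^ (δ*(t+j)) - 1) := by
    intro j
    have h1 : u ^ k = u ^ (k₀ - (j:ℤ)*δ) * u ^ (δ*(t+j)) := by
      rw [← zpow_add₀ myU_ne_zero]
      have ht' : k = k₀ + δ * t := by linarith
      congr 1
      rw [ht']; ring
    simp only [hf, h1]
    ring
  -- each factor nonzero
  rw [hP] at hP0 ⊢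
  have hfne : ∀ j ∈ Finset.range lam, f j ≠ 0 := Finset.prod_ne_zero_iff.mp hP0
  have htj : ∀ j ∈ Finset.range lam, t + (j:ℤ) ≠ 0 := by
    intro j hj h0
    apply hfne j hj
    rw [hfact j, h0, mul_zero, zpow_zero, sub_self, mul_zero]
  have ht0 : t ≠ 0 := by
    have := htj 0 (Finset.mem_range.mpr hlam)
    simpa using this
  -- valuation of each factor
  have hval : ∀ j ∈ Finset.range lam,
      (f j).valuation = 1 + (padicValNat p (t + (j:ℤ)).natAbs : ℤ) := by
    intro j hj
    have hnj : δ * (t + (j:ℤ)) ≠ 0 := mul_ne_zero (by omega) (htj j hj)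
    obtain ⟨hv, hne⟩ := myValZpow (p := p) hodd hnj
    rw [hfact j, Padic.valuation_mul (zpow_ne_zero _ myU_ne_zero) hne, myU_zpow_val,
      zero_add, hv]
    congr 1
    have hpd : ¬ (p:ℤ) ∣ δ := by
      intro h
      have := Int.le_of_dvd (by omega) h
      omega
    rw [padicValInt.mul (by omega) (htj j hj), padicValInt.eq_zero_of_not_dvd hpd, zero_add]
    simp [padicValInt]
  -- total valuation
  have hvalP : ((∏ j ∈ Finset.range lam, f j).valuation : ℤ)
      = (lam : ℤ) + ∑ j ∈ Finset.range lam, (padicValNat p (t + (j:ℤ)).natAbs : ℤ) := by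
    rw [myValProd hfne, Finset.sum_congr rfl hval, Finset.sum_add_distrib]
    simp
  -- find m' : ℕ such that the sum matches the consecutive-run normal form
  have hmain : ∃ m' : ℕ, ((m' : ℤ) + lam ≤ |t| * lam) ∧
      (∑ j ∈ Finset.range lam, (padicValNat p (t + (j:ℤ)).natAbs : ℤ)
        = ∑ j ∈ Finset.range lam, (padicValNat p (m' + 1 + j) : ℤ)) := by
    rcases ht0.lt_or_gt with hneg | hpos
    · -- all t + j negative
      have hall : t + (lam:ℤ) - 1 < 0 := by
        by_contra hge
        push_neg at hge
        have hj : ((-t).toNat : ℤ) = -t := by omega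
        have := htj (-t).toNat (Finset.mem_range.mpr (by omega))
        omega
      set M : ℕ := (-t).toNat with hM
      have hMt : (M : ℤ) = -t := by omega
      have hMlam : lam ≤ M := by omega
      refine ⟨M - lam, by
        have habs : |t| = (M:ℤ) := by rw [abs_of_neg hneg]; omega
        have hc : ((M - lam : ℕ) : ℤ) = (M:ℤ) - lam := by omega
        rw [hc, habs]
        have h0 : (0:ℤ) ≤ (M:ℤ)*((lam:ℤ)-1) :=
          mul_nonneg (by positivity) (by omega)
        linarith, ?_⟩
      rw [← Finset.sum_range_reflect (fun j => (padicValNat p ((M - lam) + 1 + j) : ℤ)) lam]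
      refine Finset.sum_congr rfl fun j hj => ?_
      have hjl := Finset.mem_range.mp hj
      congr 2
      omega
    · -- all t + j positive
      set m : ℕ := t.toNat with hm
      have hmt : (m : ℤ) = t := by omega
      refine ⟨m - 1, by
        have habs : |t| = t := abs_of_pos hpos
        have hc : ((m - 1 : ℕ) : ℤ) = t - 1 := by omega
        rw [hc, habs]
        have h0 : (0:ℤ) ≤ (t - 1)*((lam:ℤ)-1) :=
          mul_nonneg (by omega) (by omega)
        have hl1 : (1:ℤ) ≤ (lam:ℤ) := by exact_mod_cast hlam
        nlinarith, ?_⟩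
      refine Finset.sum_congr rfl fun j hj => ?_
      congr 2
      omega
  obtain ⟨m', hmbound, hsum⟩ := hmain
  set S : ℤ := ∑ j ∈ Finset.range lam, (padicValNat p (m' + 1 + j) : ℤ) with hS
  have hcore := myCore (p := p) m' lam
  set L : ℕ := Nat.log p (m' + lam) with hL
  -- now the real-number estimates
  have hp1R : (1:ℝ) < (p:ℝ) - 1 := by
    have : (3:ℝ) ≤ (p:ℝ) := by exact_mod_cast hp3
    linarith
  have hvalR : ((∏ j ∈ Finset.range lam, f j).valuation : ℝ) = (lam : ℝ) + (S : ℝ) := by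
    exact_mod_cast congrArg (Int.cast : ℤ → ℝ) (hvalP.trans (by rw [hsum]))
  have hdiff : ((∏ j ∈ Finset.range lam, f j).valuation : ℝ)
      - (p:ℝ) * lam / ((p:ℝ) - 1)
      = (((p:ℤ)-1) * S - lam : ℤ) / ((p:ℝ) - 1) := by
    rw [hvalR]
    push_cast
    field_simp
    ring
  rw [hdiff, abs_div, abs_of_pos (by linarith : (0:ℝ) < (p:ℝ) - 1)]
  have hcoreR : |((((p:ℤ)-1) * S - lam : ℤ) : ℝ)| ≤ ((p:ℝ) - 1) * ((L:ℝ) + 1) := by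
    rw [hS]
    exact_mod_cast hcore
  have hstep1 : |((((p:ℤ)-1) * S - lam : ℤ) : ℝ)| / ((p:ℝ) - 1) ≤ (L:ℝ) + 1 := by
    rw [div_le_iff₀ (by linarith)]
    linarith [hcoreR]
  refine hstep1.trans ?_
  -- L + 1 ≤ 2 (log lam + log |k-k₀| + 1)
  have hN1 : 1 ≤ m' + lam := by omega
  have hlogp : (1:ℝ) ≤ Real.log p := by
    have h3 : (3:ℝ) ≤ (p:ℝ) := by exact_mod_cast hp3
    have := Real.exp_one_lt_d9
    have hlt : Real.exp 1 < (p:ℝ) := by linarith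
    have h4 := Real.log_lt_log (Real.exp_pos 1) hlt
    rw [Real.log_exp] at h4
    exact h4.le
  have hLlog : (L:ℝ) ≤ Real.log (m' + lam : ℕ) := by
    have hpow : (p:ℕ)^L ≤ m' + lam := Nat.pow_log_le_self p (by omega)
    have hpowR : ((p:ℝ))^L ≤ ((m' + lam : ℕ) : ℝ) := by exact_mod_cast hpow
    have h1 := Real.log_le_log (by positivity) hpowR
    rw [Real.log_pow] at h1
    calc (L:ℝ) = (L:ℝ) * 1 := by ring
      _ ≤ (L:ℝ) * Real.log p := by
          apply mul_le_mul_of_nonneg_left hlogp (by positivity)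
      _ ≤ Real.log (m' + lam : ℕ) := h1
  have htabs : (1:ℤ) ≤ |t| := by have := abs_pos.mpr ht0; omega
  have hkk : |k - k₀| = δ * |t| := by
    rw [ht, abs_mul, abs_of_pos (by omega : (0:ℤ) < δ)]
  have hkk1 : (1:ℤ) ≤ |k - k₀| := by rw [hkk]; nlinarith
  have hlogN : Real.log (m' + lam : ℕ) ≤ Real.log (|t| : ℤ) + Real.log lam := by
    rw [← Real.log_mul (by exact_mod_cast (by omega : ¬ (|t| : ℤ) = 0) : ((|t| : ℤ) : ℝ) ≠ 0)
      (Nat.cast_ne_zero.mpr (by omega) : (lam:ℝ) ≠ 0)]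
    apply Real.log_le_log (by exact_mod_cast hN1)
    have h5 : ((m' + lam : ℕ) : ℤ) ≤ |t| * lam := by push_cast; linarith [hmbound]
    exact_mod_cast h5
  have hlogt : Real.log (|t| : ℤ) ≤ Real.log ((|k - k₀| : ℤ) : ℝ) := by
    apply Real.log_le_log (by exact_mod_cast htabs)
    have : |t| ≤ |k - k₀| := by rw [hkk]; nlinarith
    exact_mod_cast this
  have hloglam : (0:ℝ) ≤ Real.log lam :=
    Real.log_nonneg (by exact_mod_cast hlam)
  have hlogkk : (0:ℝ) ≤ Real.log ((|k - k₀| : ℤ) : ℝ) :=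
    Real.log_nonneg (by exact_mod_cast hkk1)
  nlinarith [hLlog, hlogN, hlogt]
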